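/- arXiv:1710.07429 — 3 statements merged into one kernel-verified Lean document; each statement's English description precedes it below -/
import Mathlib

section
/- For every m ∈ ℕ, the cumulative distribution function G_m of the sum of m independent Uniform(0,1) random variables satisfies, for all x not in {0,1,...,m}, that its m-th derivative equals G_m^{(m)}(x) = (-1)^{⌊x⌋}·C(m-1, ⌊x⌋), where C(m-1, ⌊x⌋) is the binomial coefficient (interpreted as 0 when ⌊x⌋ ∉ {0,...,m-1}). -/
open MeasureTheory

open Finset

/-- The CDF of the Irwin–Hall distribution: the distribution of the sum of `m`
independent `Uniform(0,1)` random variables, realized on the unit cube with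
Lebesgue measure. -/
noncomputable def irwinHallCDF (m : ℕ) (x : ℝ) : ℝ :=
  (volume {y : Fin m → ℝ | (∀ i, y i ∈ Set.Icc (0 : ℝ) 1) ∧ ∑ i, y i ≤ x}).toReal

lemma ih_measurableSet (m : ℕ) (x : ℝ) :
    MeasurableSet {y : Fin m → ℝ | (∀ i, y i ∈ Set.Icc (0 : ℝ) 1) ∧ ∑ i, y i ≤ x} := by
  have h1 : MeasurableSet {y : Fin m → ℝ | ∀ i, y i ∈ Set.Icc (0:ℝ) 1} := by
    have : {y : Fin m → ℝ | ∀ i, y i ∈ Set.Icc (0:ℝ) 1}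
        = Set.pi Set.univ (fun _ => Set.Icc (0:ℝ) 1) := by
      ext y; simp [Set.mem_pi, Pi.le_def, forall_and]
    rw [this]
    exact MeasurableSet.univ_pi fun _ => measurableSet_Icc
  have h2 : MeasurableSet {y : Fin m → ℝ | ∑ i, y i ≤ x} :=
    measurableSet_le (Finset.measurable_sum Finset.univ fun i _ => measurable_pi_apply i)
      measurable_const
  exact h1.inter h2

lemma ih_le_one (m : ℕ) (x : ℝ) :
    volume {y : Fin m → ℝ | (∀ i, y i ∈ Set.Icc (0 : ℝ) 1) ∧ ∑ i, y i ≤ x} ≤ 1 := by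
  calc volume {y : Fin m → ℝ | (∀ i, y i ∈ Set.Icc (0 : ℝ) 1) ∧ ∑ i, y i ≤ x}
      ≤ volume (Set.pi Set.univ fun _ : Fin m => Set.Icc (0:ℝ) 1) := by
        apply measure_mono; intro y hy; exact fun i _ => hy.1 i
    _ = 1 := by rw [volume_pi_pi]; simp

lemma ih_rec (n : ℕ) (x : ℝ) :
    (volume {y : Fin (n+1) → ℝ | (∀ i, y i ∈ Set.Icc (0 : ℝ) 1) ∧ ∑ i, y i ≤ x})
    = ∫⁻ t in Set.Icc (0:ℝ) 1,
        volume {y : Fin n → ℝ | (∀ i, y i ∈ Set.Icc (0 : ℝ) 1) ∧ ∑ i, y i ≤ x - t} := by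
  set e := MeasurableEquiv.piFinSuccAbove (fun _ : Fin (n+1) => ℝ) 0 with he
  have MP : MeasurePreserving e volume ((volume : Measure ℝ).prod (volume : Measure (Fin n → ℝ))) :=
    measurePreserving_piFinSuccAbove (fun _ => volume) 0
  set T : Set (ℝ × (Fin n → ℝ)) :=
    {p | (p.1 ∈ Set.Icc (0:ℝ) 1) ∧ (∀ i, p.2 i ∈ Set.Icc (0:ℝ) 1) ∧ ∑ i, p.2 i ≤ x - p.1} with hT
  have hTm : MeasurableSet T := by
    have h1 : MeasurableSet {p : ℝ × (Fin n → ℝ) | p.1 ∈ Set.Icc (0:ℝ) 1} :=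
      measurable_fst measurableSet_Icc
    have h2 : MeasurableSet {p : ℝ × (Fin n → ℝ) | ∀ i, p.2 i ∈ Set.Icc (0:ℝ) 1} := by
      have : {p : ℝ × (Fin n → ℝ) | ∀ i, p.2 i ∈ Set.Icc (0:ℝ) 1}
          = Prod.snd ⁻¹' (Set.pi Set.univ (fun _ => Set.Icc (0:ℝ) 1)) := by
        ext p; simp [Set.mem_pi, Pi.le_def, forall_and]
      rw [this]
      exact measurable_snd (MeasurableSet.univ_pi fun _ => measurableSet_Icc)
    have h3 : MeasurableSet {p : ℝ × (Fin n → ℝ) | ∑ i, p.2 i ≤ x - p.1} :=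
      measurableSet_le
        (Finset.measurable_sum Finset.univ fun i _ => (measurable_pi_apply i).comp measurable_snd)
        (measurable_const.sub measurable_fst)
    exact h1.inter (h2.inter h3)
  have hey : ∀ y : Fin (n+1) → ℝ, e y = (y 0, fun j : Fin n => y j.succ) := by
    intro y
    simp only [he, MeasurableEquiv.piFinSuccAbove_apply, Fin.insertNthEquiv_symm_apply]
    exact Prod.ext rfl rfl
  have hpre : e ⁻¹' T = {y : Fin (n+1) → ℝ | (∀ i, y i ∈ Set.Icc (0 : ℝ) 1) ∧ ∑ i, y i ≤ x} := by
    ext y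
    simp only [Set.mem_preimage, hey y, hT, Set.mem_setOf_eq]
    rw [Fin.sum_univ_succ y]
    constructor
    · rintro ⟨h0, hs, hsum⟩
      constructor
      · intro i
        rcases Fin.eq_zero_or_eq_succ i with rfl | ⟨j, rfl⟩
        · exact h0
        · exact hs j
      · linarith
    · rintro ⟨h, hsum⟩
      exact ⟨h 0, fun i => h i.succ, by linarith⟩
  rw [← hpre, MP.measure_preimage hTm.nullMeasurableSet, Measure.prod_apply hTm]
  have hsect : ∀ t : ℝ, volume (Prod.mk t ⁻¹' T)
      = Set.indicator (Set.Icc (0:ℝ) 1)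
          (fun t => volume {y : Fin n → ℝ | (∀ i, y i ∈ Set.Icc (0 : ℝ) 1) ∧ ∑ i, y i ≤ x - t}) t := by
    intro t
    by_cases ht : t ∈ Set.Icc (0:ℝ) 1
    · rw [Set.indicator_of_mem ht]
      congr 1
      ext z
      simp only [hT, Set.mem_preimage, Set.mem_setOf_eq]
      constructor
      · rintro ⟨_, h2, h3⟩; exact ⟨h2, h3⟩
      · rintro ⟨h2, h3⟩; exact ⟨ht, h2, h3⟩
    · rw [Set.indicator_of_notMem ht]
      have : Prod.mk t ⁻¹' T = ∅ := by
        ext z; simp only [hT, Set.mem_preimage, Set.mem_setOf_eq, Set.mem_empty_iff_false, iff_false]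
        rintro ⟨h1, _⟩; exact ht h1
      rw [this]; simp
  rw [lintegral_congr hsect, lintegral_indicator measurableSet_Icc]

lemma ih_zero (x : ℝ) : irwinHallCDF 0 x = if 0 ≤ x then 1 else 0 := by
  unfold irwinHallCDF
  by_cases h : 0 ≤ x
  · rw [if_pos h]
    have : {y : Fin 0 → ℝ | (∀ i, y i ∈ Set.Icc (0 : ℝ) 1) ∧ ∑ i, y i ≤ x} = Set.univ := by
      ext y; simp [Fin.forall_fin_zero_pi, h]
    rw [this, MeasureTheory.volume_pi, Measure.pi_univ]
    simp
  · rw [if_neg h]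
    have : {y : Fin 0 → ℝ | (∀ i, y i ∈ Set.Icc (0 : ℝ) 1) ∧ ∑ i, y i ≤ x} = ∅ := by
      ext y
      simp only [Set.mem_setOf_eq, Set.mem_empty_iff_false, iff_false, not_and]
      intro _
      have hs : (∑ i : Fin 0, y i) = 0 := by simp
      rw [hs]
      exact h
    rw [this]
    simp

lemma ih_cdf_rec (n : ℕ) (x : ℝ) :
    irwinHallCDF (n+1) x = ∫ t in Set.Icc (0:ℝ) 1, irwinHallCDF n (x - t) := by
  have hmeas : AEMeasurable
      (fun t : ℝ => volume {y : Fin n → ℝ | (∀ i, y i ∈ Set.Icc (0 : ℝ) 1) ∧ ∑ i, y i ≤ x - t})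
      (volume.restrict (Set.Icc (0:ℝ) 1)) := by
    have : Antitone
        (fun t : ℝ => volume {y : Fin n → ℝ | (∀ i, y i ∈ Set.Icc (0 : ℝ) 1) ∧ ∑ i, y i ≤ x - t}) := by
      intro a b hab
      apply measure_mono
      rintro y ⟨h1, h2⟩
      exact ⟨h1, by linarith⟩
    exact (this.measurable).aemeasurable
  have hfin : ∀ᵐ t ∂(volume.restrict (Set.Icc (0:ℝ) 1)),
      volume {y : Fin n → ℝ | (∀ i, y i ∈ Set.Icc (0 : ℝ) 1) ∧ ∑ i, y i ≤ x - t} < ⊤ := by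
    filter_upwards with t
    exact lt_of_le_of_lt (ih_le_one n (x - t)) (by norm_num)
  rw [show (fun t => irwinHallCDF n (x - t)) = fun t =>
      (volume {y : Fin n → ℝ | (∀ i, y i ∈ Set.Icc (0 : ℝ) 1) ∧ ∑ i, y i ≤ x - t}).toReal from rfl,
    integral_toReal hmeas hfin]
  unfold irwinHallCDF
  rw [ih_rec n x]

noncomputable def ihF (m : ℕ) (x : ℝ) : ℝ :=
  (m.factorial : ℝ)⁻¹ * ∑ k ∈ Finset.range (m+1), (-1:ℝ)^k * (m.choose k) * (max (x - k) 0)^m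

lemma pascal_sum (n : ℕ) (a : ℕ → ℝ) :
    ∑ k ∈ range (n+2), (-1:ℝ)^k * ((n+1).choose k) * a k
      = ∑ k ∈ range (n+1), (-1:ℝ)^k * (n.choose k) * a k
        - ∑ k ∈ range (n+1), (-1:ℝ)^k * (n.choose k) * a (k+1) := by
  have hsplit : ∀ k, ((n+1).choose (k+1) : ℝ) = n.choose k + n.choose (k+1) := by
    intro k; exact_mod_cast Nat.choose_succ_succ n k
  have hL : ∑ k ∈ range (n+2), (-1:ℝ)^k * ((n+1).choose k) * a k
      = (∑ k ∈ range (n+1), ((-1:ℝ)^(k+1) * (n.choose k) * a (k+1)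
          + (-1:ℝ)^(k+1) * (n.choose (k+1)) * a (k+1))) + a 0 := by
    rw [Finset.sum_range_succ' (fun k => (-1:ℝ)^k * ((n+1).choose k) * a k) (n+1)]
    simp only [pow_zero, Nat.choose_zero_right, Nat.cast_one, one_mul]
    congr 1
    apply Finset.sum_congr rfl
    intro k _
    rw [hsplit]; ring
  rw [hL, Finset.sum_add_distrib]
  have hU : ∑ k ∈ range (n+1), (-1:ℝ)^(k+1) * (n.choose (k+1)) * a (k+1)
      = ∑ k ∈ range n, (-1:ℝ)^(k+1) * (n.choose (k+1)) * a (k+1) := by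
    rw [Finset.sum_range_succ]
    simp [Nat.choose_succ_self]
  have hS : ∑ k ∈ range (n+1), (-1:ℝ)^k * (n.choose k) * a k
      = (∑ k ∈ range n, (-1:ℝ)^(k+1) * (n.choose (k+1)) * a (k+1)) + a 0 := by
    rw [Finset.sum_range_succ' (fun k => (-1:ℝ)^k * (n.choose k) * a k) n]
    simp
  have hT : ∑ k ∈ range (n+1), (-1:ℝ)^(k+1) * (n.choose k) * a (k+1)
      = - ∑ k ∈ range (n+1), (-1:ℝ)^k * (n.choose k) * a (k+1) := by
    rw [← Finset.sum_neg_distrib]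
    apply Finset.sum_congr rfl
    intro k _; ring
  rw [hU, hS, hT]
  ring

lemma hasDerivAt_maxpow (q : ℕ) (hq : 2 ≤ q) (u : ℝ) :
    HasDerivAt (fun u : ℝ => max u 0 ^ q) (q * max u 0 ^ (q-1)) u := by
  rcases lt_trichotomy u 0 with hu | hu | hu
  · have hev : (fun v : ℝ => max v 0 ^ q) =ᶠ[nhds u] fun _ => (0:ℝ)^q := by
      filter_upwards [eventually_lt_nhds hu] with v hv
      rw [max_eq_right hv.le]
    have h0 : HasDerivAt (fun _ : ℝ => (0:ℝ)^q) 0 u := hasDerivAt_const u _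
    have := h0.congr_of_eventuallyEq hev
    have this : HasDerivAt (fun v : ℝ => max v 0 ^ q) _ u := this
    convert this using 1
    rw [max_eq_right hu.le, zero_pow (show q - 1 ≠ 0 by omega)]
    ring
  · subst hu
    have : (q : ℝ) * max 0 0 ^ (q-1) = 0 := by
      rw [max_self, zero_pow (by omega)]; ring
    rw [this]
    rw [hasDerivAt_iff_isLittleO]
    simp only [sub_zero, smul_zero, sub_zero, max_self, zero_pow (by omega : q ≠ 0)]
    have hb : ∀ᶠ v : ℝ in nhds 0, ‖max v 0 ^ q - 0‖ ≤ ‖v‖ * ‖v‖ := by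
      filter_upwards [Metric.ball_mem_nhds (0:ℝ) one_pos] with v hv
      simp only [Metric.mem_ball, Real.dist_eq, sub_zero] at hv
      simp only [Real.norm_eq_abs, sub_zero]
      have h1 : |max v 0 ^ q| ≤ |v| ^ q := by
        rw [abs_pow]
        apply pow_le_pow_left₀ (abs_nonneg _)
        rcases le_or_gt v 0 with h | h
        · rw [max_eq_right h]; simp [abs_nonneg]
        · rw [max_eq_left h.le]
      have h2 : |v| ^ q ≤ |v| ^ 2 := by
        apply pow_le_pow_of_le_one (abs_nonneg _) _ hq
        exact hv.le
      calc |max v 0 ^ q| ≤ |v| ^ q := h1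
        _ ≤ |v| ^ 2 := h2
        _ = |v| * |v| := by ring
    have hv0 : Filter.Tendsto (fun v : ℝ => ‖v‖) (nhds 0) (nhds 0) := by
      simpa using (continuous_norm.tendsto (0:ℝ))
    have hO : (fun v : ℝ => max v 0 ^ q - 0) =O[nhds 0] fun v : ℝ => ‖v‖ * ‖v‖ :=
      Asymptotics.IsBigO.of_bound 1 (by
        filter_upwards [hb] with v hv
        simpa using hv)
    have ho : (fun v : ℝ => ‖v‖ * ‖v‖) =o[nhds 0] fun v : ℝ => v - 0 := by
      rw [Asymptotics.isLittleO_iff]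
      intro c hc
      filter_upwards [Metric.ball_mem_nhds (0:ℝ) hc] with v hv
      simp only [Metric.mem_ball, Real.dist_eq, sub_zero] at hv
      simp only [Real.norm_eq_abs, norm_mul, abs_abs, sub_zero]
      exact mul_le_mul_of_nonneg_right hv.le (abs_nonneg v)
    have := hO.trans_isLittleO ho
    simpa using this
  · have hev : (fun v : ℝ => max v 0 ^ q) =ᶠ[nhds u] fun v => v^q := by
      filter_upwards [eventually_gt_nhds hu] with v hv
      rw [max_eq_left hv.le]
    have h0 : HasDerivAt (fun v : ℝ => v^q) (q * u ^ (q-1)) u := hasDerivAt_pow q u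
    have := h0.congr_of_eventuallyEq hev
    have this : HasDerivAt (fun v : ℝ => max v 0 ^ q) _ u := this
    convert this using 2
    rw [max_eq_left hu.le]

lemma integral_maxpow (n : ℕ) (hn : 1 ≤ n) (a : ℝ) :
    ∫ t in (0:ℝ)..1, max (a - t) 0 ^ n
      = (max a 0 ^ (n+1) - max (a-1) 0 ^ (n+1)) / (n+1) := by
  have hne : ((n:ℝ) + 1) ≠ 0 := by positivity
  have hD : ∀ t : ℝ, HasDerivAt (fun t : ℝ => -(max (a - t) 0 ^ (n+1)) / (n+1))
      (max (a - t) 0 ^ n) t := by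
    intro t
    have hinner : HasDerivAt (fun t : ℝ => a - t) (-1) t := by
      simpa using (hasDerivAt_id t).const_sub a
    have hout := hasDerivAt_maxpow (n+1) (by omega) (a - t)
    have hcomp := HasDerivAt.comp t hout hinner
    have := hcomp.const_mul (-(1:ℝ)/(n+1))
    have this : HasDerivAt (fun y : ℝ => -1 / ((n:ℝ) + 1) * ((fun u : ℝ => max u 0 ^ (n + 1)) ∘ HSub.hSub a) y) _ t := this
    convert this using 2 with s
    · simp only [Function.comp_apply]
      ring
    · push_cast
      field_simp
  have hcont : Continuous fun t : ℝ => max (a - t) 0 ^ n :=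
    (((continuous_const.sub continuous_id).max continuous_const).pow n)
  rw [intervalIntegral.integral_eq_sub_of_hasDerivAt (fun t _ => hD t)
    (hcont.intervalIntegrable 0 1)]
  field_simp
  ring

lemma ihF_rec (n : ℕ) (hn : 1 ≤ n) (x : ℝ) :
    ∫ t in Set.Icc (0:ℝ) 1, ihF n (x - t) = ihF (n+1) x := by
  have hIcc : ∫ t in Set.Icc (0:ℝ) 1, ihF n (x - t)
      = ∫ t in (0:ℝ)..1, ihF n (x - t) := by
    rw [MeasureTheory.integral_Icc_eq_integral_Ioc,
      intervalIntegral.integral_of_le zero_le_one]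
  rw [hIcc]
  simp only [ihF]
  have hint : ∀ k : ℕ, IntervalIntegrable
      (fun t : ℝ => (-1:ℝ)^k * (n.choose k) * max (x - t - k) 0 ^ n) volume 0 1 := by
    intro k
    exact (continuous_const.mul ((((continuous_const.sub continuous_id).sub
      continuous_const).max continuous_const).pow n)).intervalIntegrable 0 1
  rw [intervalIntegral.integral_const_mul, intervalIntegral.integral_finset_sum
    (fun k _ => hint k)]
  have hterm : ∀ k : ℕ, (∫ t in (0:ℝ)..1, (-1:ℝ)^k * (n.choose k) * max (x - t - k) 0 ^ n)
      = (-1:ℝ)^k * (n.choose k) * ((max (x - k) 0 ^ (n+1) - max (x - k - 1) 0 ^ (n+1)) / (n+1)) := by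
    intro k
    rw [intervalIntegral.integral_const_mul]
    congr 1
    have : (fun t : ℝ => max (x - t - k) 0 ^ n) = fun t : ℝ => max ((x - k) - t) 0 ^ n := by
      funext t; congr 2; ring
    rw [this, integral_maxpow n hn (x - k)]
  rw [Finset.sum_congr rfl (fun k _ => hterm k)]
  have hps := pascal_sum n (fun j => max (x - j) 0 ^ (n+1))
  have hsplit : ∑ k ∈ range (n+1), (-1:ℝ)^k * (n.choose k)
        * ((max (x - k) 0 ^ (n+1) - max (x - k - 1) 0 ^ (n+1)) / (n+1))
      = (((n:ℝ)+1))⁻¹ * (∑ k ∈ range (n+1), (-1:ℝ)^k * (n.choose k) * max (x - k) 0 ^ (n+1)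
        - ∑ k ∈ range (n+1), (-1:ℝ)^k * (n.choose k) * max (x - (k+1:ℕ)) 0 ^ (n+1)) := by
    rw [← Finset.sum_sub_distrib, Finset.mul_sum]
    apply Finset.sum_congr rfl
    intro k _
    have : ((k:ℝ) + 1) = ((k+1 : ℕ) : ℝ) := by push_cast; ring
    rw [show x - ((k+1:ℕ):ℝ) = x - k - 1 by push_cast; ring]
    field_simp
  rw [hsplit, ← hps]
  rw [Nat.factorial_succ]
  push_cast
  rw [mul_inv]
  ring

lemma ihF_one (x : ℝ) : ihF 1 x = max x 0 - max (x - 1) 0 := by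
  simp [ihF, Finset.sum_range_succ]
  ring

lemma ih_one (x : ℝ) : irwinHallCDF 1 x = ihF 1 x := by
  rw [ih_cdf_rec 0 x, ihF_one]
  have hfun : (fun t : ℝ => irwinHallCDF 0 (x - t))
      = Set.indicator (Set.Iic x) (fun _ => (1:ℝ)) := by
    funext t
    rw [ih_zero]
    by_cases h : t ≤ x
    · rw [Set.indicator_of_mem (Set.mem_Iic.mpr h), if_pos (by linarith)]
    · rw [Set.indicator_of_notMem (fun hc => h (Set.mem_Iic.mp hc)),
        if_neg (fun hc => h (by linarith))]
  have hicc : Set.Icc (0:ℝ) 1 ∩ Set.Iic x = Set.Icc 0 (min 1 x) := by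
    ext t
    simp only [Set.mem_inter_iff, Set.mem_Icc, Set.mem_Iic, le_min_iff]
    tauto
  rw [hfun, setIntegral_indicator measurableSet_Iic, hicc, setIntegral_const,
    measureReal_def, Real.volume_Icc, smul_eq_mul, mul_one]
  rcases le_or_gt x 0 with h | h
  · rw [min_eq_right (by linarith : x ≤ 1), sub_zero, ENNReal.ofReal_of_nonpos h,
      max_eq_right h, max_eq_right (by linarith : x - 1 ≤ 0)]
    simp
  · rcases le_or_gt 1 x with h1 | h1
    · rw [min_eq_left h1, sub_zero, ENNReal.toReal_ofReal zero_le_one,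
        max_eq_left (by linarith : (0:ℝ) ≤ x), max_eq_left (by linarith : (0:ℝ) ≤ x - 1)]
      ring
    · rw [min_eq_right h1.le, sub_zero, ENNReal.toReal_ofReal h.le,
        max_eq_left h.le, max_eq_right (by linarith : x - 1 ≤ 0)]
      ring

lemma ih_eq_ihF (m : ℕ) (hm : 1 ≤ m) : irwinHallCDF m = ihF m := by
  induction m with
  | zero => omega
  | succ n ih =>
    rcases Nat.eq_or_lt_of_le hm with h | h
    · funext x
      rw [← h] at *
      exact ih_one x
    · have hn : 1 ≤ n := by omega
      funext x
      rw [ih_cdf_rec n x, ← ihF_rec n hn x]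
      congr 1
      funext t
      rw [ih hn]

lemma my_iteratedDeriv_const_mul (n : ℕ) (c : ℝ) (f : ℝ → ℝ) (hf : ContDiff ℝ n f) (x : ℝ) :
    iteratedDeriv n (fun y => c * f y) x = c * iteratedDeriv n f x := by
  simp only [← iteratedDerivWithin_univ]
  exact iteratedDerivWithin_const_mul (Set.mem_univ x) uniqueDiffOn_univ c hf.contDiffWithinAt

lemma my_iteratedDeriv_zero_fun (n : ℕ) (x : ℝ) :
    iteratedDeriv n (fun _ : ℝ => (0:ℝ)) x = 0 := by
  induction n generalizing x with
  | zero => simp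
  | succ k ih =>
      rw [iteratedDeriv_succ']
      have : deriv (fun _ : ℝ => (0:ℝ)) = fun _ : ℝ => (0:ℝ) := by
        funext y; simp
      rw [this]
      exact ih x

lemma my_iteratedDeriv_sum {ι : Type*} (s : Finset ι) (n : ℕ) (f : ι → ℝ → ℝ)
    (hf : ∀ i ∈ s, ContDiff ℝ n (f i)) (x : ℝ) :
    iteratedDeriv n (fun y => ∑ i ∈ s, f i y) x = ∑ i ∈ s, iteratedDeriv n (f i) x := by
  classical
  induction s using Finset.induction with
  | empty =>
      simp only [Finset.sum_empty]
      exact my_iteratedDeriv_zero_fun n x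
  | @insert a s ha ih =>
      have hfa : ContDiff ℝ n (f a) := hf a (Finset.mem_insert_self a s)
      have hfs : ∀ i ∈ s, ContDiff ℝ n (f i) := fun i hi => hf i (Finset.mem_insert_of_mem hi)
      have hsum : ContDiff ℝ n (fun y => ∑ i ∈ s, f i y) :=
        ContDiff.sum fun i hi => hfs i hi
      simp only [Finset.sum_insert ha]
      have : iteratedDeriv n (fun y => f a y + ∑ i ∈ s, f i y) x
          = iteratedDeriv n (f a) x + iteratedDeriv n (fun y => ∑ i ∈ s, f i y) x := by
        simp only [← iteratedDerivWithin_univ]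
        exact iteratedDerivWithin_add (Set.mem_univ x) uniqueDiffOn_univ
          hfa.contDiffWithinAt hsum.contDiffWithinAt
      rw [this, ih hfs]

lemma my_iteratedDeriv_pow_self (n : ℕ) :
    iteratedDeriv n (fun y : ℝ => y ^ n) = fun _ => (n.factorial : ℝ) := by
  induction n with
  | zero => funext x; simp
  | succ k ih =>
      funext x
      rw [iteratedDeriv_succ']
      have hderiv : deriv (fun y : ℝ => y ^ (k+1)) = fun y => ((k:ℝ)+1) * y ^ k := by
        funext y
        rw [deriv_pow_field]
        push_cast
        ring
      rw [hderiv]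
      rw [my_iteratedDeriv_const_mul k ((k:ℝ)+1) (fun y => y ^ k)
        ((contDiff_id.pow k).of_le le_top) x, ih]
      rw [Nat.factorial_succ]
      push_cast
      ring

lemma my_iteratedDeriv_shift_pow (m : ℕ) (c x : ℝ) :
    iteratedDeriv m (fun y : ℝ => (y - c) ^ m) x = (m.factorial : ℝ) := by
  have := iteratedDeriv_comp_add_const m (fun y : ℝ => y ^ m) (-c)
  have h2 : (fun z : ℝ => (z + -c) ^ m) = fun z : ℝ => (z - c) ^ m := by
    funext z; ring_nf
  rw [h2] at this
  rw [this, my_iteratedDeriv_pow_self]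

lemma alt_partial_sum (p : ℕ) : ∀ j : ℕ,
    ∑ k ∈ range (j+1), (-1:ℝ)^k * ((p+1).choose k) = (-1:ℝ)^j * (p.choose j) := by
  intro j
  induction j with
  | zero => simp
  | succ i ih =>
      rw [Finset.sum_range_succ, ih]
      have : ((p+1).choose (i+1) : ℝ) = p.choose i + p.choose (i+1) := by
        exact_mod_cast Nat.choose_succ_succ p i
      rw [this]
      ring

/-- **The m-th derivative of the Irwin–Hall CDF.** For `x ∉ {0,1,...,m}`,
`G_m⁽ᵐ⁾(x) = (-1)^⌊x⌋ · C(m-1, ⌊x⌋)`, the binomial coefficient interpreted as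
`0` when `⌊x⌋ ∉ {0,...,m-1}`. -/
theorem irwinHall_iteratedDeriv (m : ℕ) (hm : 0 < m) (x : ℝ)
    (hx : ∀ k : ℕ, k ≤ m → x ≠ (k : ℝ)) :
    iteratedDeriv m (irwinHallCDF m) x =
      if 0 ≤ ⌊x⌋ then (-1 : ℝ) ^ ⌊x⌋.toNat * ((m - 1).choose ⌊x⌋.toNat : ℝ)
      else 0 := by
  rw [ih_eq_ihF m hm]
  -- local polynomial replacement
  set tk : ℕ → ℝ → ℝ := fun k y =>
    (-1:ℝ)^k * (m.choose k) * (if (k:ℝ) < x then (y - k)^m else 0) with htk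
  have hev : ihF m =ᶠ[nhds x]
      fun y => (m.factorial : ℝ)⁻¹ * ∑ k ∈ range (m+1), tk k y := by
    have h1 : ∀ᶠ y in nhds x, ∀ k ∈ Finset.range (m+1),
        max (y - (k:ℝ)) 0 ^ m = (if (k:ℝ) < x then (y - k)^m else 0) := by
      rw [Filter.eventually_all_finset]
      intro k hk
      have hxk : x ≠ (k:ℝ) := hx k (by simpa using Nat.lt_succ_iff.mp (Finset.mem_range.mp hk))
      rcases lt_or_gt_of_ne hxk with h | h
      · filter_upwards [eventually_lt_nhds h] with y hy
        rw [if_neg (not_lt.mpr h.le), max_eq_right (by linarith), zero_pow hm.ne']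
      · filter_upwards [eventually_gt_nhds h] with y hy
        rw [if_pos h, max_eq_left (by linarith)]
    filter_upwards [h1] with y hy
    simp only [ihF, htk]
    congr 1
    apply Finset.sum_congr rfl
    intro k hk
    rw [hy k hk]
  rw [Filter.EventuallyEq.iteratedDeriv_eq m hev]
  -- compute the derivative of the polynomial
  have hck : ∀ k : ℕ, ContDiff ℝ m (tk k) := by
    intro k
    by_cases h : (k:ℝ) < x
    · simp only [htk, if_pos h]
      exact contDiff_const.mul ((contDiff_id.sub contDiff_const).pow m)
    · simp only [htk, if_neg h]
      exact contDiff_const.mul contDiff_const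
  have hsumc : ContDiff ℝ m (fun y => ∑ k ∈ range (m+1), tk k y) :=
    ContDiff.sum fun k _ => hck k
  rw [my_iteratedDeriv_const_mul m _ _ hsumc x,
    my_iteratedDeriv_sum (range (m+1)) m tk (fun k _ => hck k) x]
  have hterm : ∀ k : ℕ, iteratedDeriv m (tk k) x
      = (if (k:ℝ) < x then (-1:ℝ)^k * (m.choose k) * (m.factorial : ℝ) else 0) := by
    intro k
    by_cases h : (k:ℝ) < x
    · simp only [htk, if_pos h]
      rw [my_iteratedDeriv_const_mul m ((-1:ℝ)^k * (m.choose k)) (fun y => (y - (k:ℝ))^m)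
        (by exact (contDiff_id.sub contDiff_const).pow m) x, my_iteratedDeriv_shift_pow]
    · simp only [htk, if_neg h]
      have : (fun y : ℝ => (-1:ℝ)^k * (m.choose k) * 0) = fun _ : ℝ => (0:ℝ) := by
        funext y; ring
      rw [this, my_iteratedDeriv_zero_fun]
  rw [Finset.sum_congr rfl (fun k _ => hterm k)]
  have hfac : (m.factorial : ℝ) ≠ 0 := by exact_mod_cast m.factorial_ne_zero
  have hmain : (m.factorial : ℝ)⁻¹ * ∑ k ∈ range (m+1),
        (if (k:ℝ) < x then (-1:ℝ)^k * (m.choose k) * (m.factorial : ℝ) else 0)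
      = ∑ k ∈ range (m+1), (if (k:ℝ) < x then (-1:ℝ)^k * (m.choose k) else 0) := by
    rw [Finset.mul_sum]
    apply Finset.sum_congr rfl
    intro k _
    by_cases h : (k:ℝ) < x
    · rw [if_pos h, if_pos h]; field_simp
    · rw [if_neg h, if_neg h]; ring
  rw [hmain]
  -- now evaluate the sum
  by_cases hflr : 0 ≤ ⌊x⌋
  · rw [if_pos hflr]
    set J := ⌊x⌋.toNat with hJ
    have hiff : ∀ k : ℕ, k ∈ range (m+1) → (((k:ℝ) < x) ↔ k ≤ J) := by
      intro k hk
      have hkm : k ≤ m := Nat.lt_succ_iff.mp (Finset.mem_range.mp hk)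
      constructor
      · intro h
        have : (k:ℤ) ≤ ⌊x⌋ := Int.le_floor.mpr (by exact_mod_cast h.le)
        omega
      · intro h
        have h1 : (k:ℤ) ≤ ⌊x⌋ := by omega
        have h2 : (k:ℝ) ≤ x := le_trans (by exact_mod_cast h1) (Int.floor_le x)
        exact lt_of_le_of_ne h2 (fun hc => hx k hkm hc.symm)
    have hsum2 : ∑ k ∈ range (m+1), (if (k:ℝ) < x then (-1:ℝ)^k * (m.choose k) else 0)
        = ∑ k ∈ range (m+1), (if k ≤ J then (-1:ℝ)^k * (m.choose k) else 0) := by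
      apply Finset.sum_congr rfl
      intro k hk
      by_cases h : (k:ℝ) < x
      · rw [if_pos h, if_pos ((hiff k hk).mp h)]
      · rw [if_neg h, if_neg (fun hc => h ((hiff k hk).mpr hc))]
    rw [hsum2]
    have hm1 : (m - 1) + 1 = m := Nat.succ_pred_eq_of_pos hm
    by_cases hJm : J ≤ m - 1
    · have hfil : Finset.filter (fun k => k ≤ J) (range (m+1)) = range (J+1) := by
        ext k
        simp only [Finset.mem_filter, Finset.mem_range]
        omega
      rw [← Finset.sum_filter, hfil]
      have := alt_partial_sum (m-1) J
      rw [hm1] at this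
      exact this
    · -- J ≥ m : full sum, both sides vanish
      have hall : Finset.filter (fun k => k ≤ J) (range (m+1)) = range (m+1) := by
        ext k
        simp only [Finset.mem_filter, Finset.mem_range]
        omega
      rw [← Finset.sum_filter, hall]
      have h0 := alt_partial_sum (m-1) m
      rw [hm1] at h0
      rw [h0, Nat.choose_eq_zero_of_lt (show m - 1 < m by omega),
        Nat.choose_eq_zero_of_lt (show m - 1 < J by omega)]
      simp
  · rw [if_neg hflr]
    have hx0 : x < 0 := by
      by_contra hc
      exact hflr (Int.floor_nonneg.mpr (not_lt.mp hc))
    apply Finset.sum_eq_zero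
    intro k _
    rw [if_neg (by push_cast; intro hc; linarith [Nat.cast_nonneg (α := ℝ) k])]
end

section
/- Let g: ℝ → ℝ be m times differentiable, let a ∈ ℝ_{≥0}^m, and set S = ∑ a_i. Then for any s ∈ ℝ, (∏ a_i)·inf_{t ∈ (s-S,s+S)} g^{(m)}(t) ≤ E_{x ~ {-1,1}^m}[x_1 x_2 ⋯ x_m · g(s + a·x)] ≤ (∏ a_i)·sup_{t ∈ (s-S,s+S)} g^{(m)}(t). -/
open Finset

noncomputable section
open scoped Classical

/-- The ±1 value associated to a Boolean bit. -/
def sgn1 (b : Bool) : ℝ := if b then 1 else -1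

/-- Probability of an event under the uniform measure on `{-1,1}^n`. -/
def cubePr (n : ℕ) (P : (Fin n → Bool) → Prop) : ℝ :=
  ((univ.filter P).card : ℝ) / 2 ^ n

/-- Expectation of a function under the uniform measure on `{-1,1}^n`. -/
def cubeE (n : ℕ) (f : (Fin n → Bool) → ℝ) : ℝ := (∑ x, f x) / 2 ^ n

/-- The linear form `a · x = ∑ aᵢ xᵢ` on `{-1,1}^n`. -/
def lin (n : ℕ) (a : Fin n → ℝ) (x : Fin n → Bool) : ℝ := ∑ i, a i * sgn1 (x i)

/-- The halfspace `1{a · x > t}` as a 0/1-valued function. -/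
def halfspace (n : ℕ) (a : Fin n → ℝ) (t : ℝ) (x : Fin n → Bool) : ℝ :=
  if t < lin n a x then 1 else 0

/-- The influence of coordinate `i` on `f`: the probability that flipping
coordinate `i` changes the value of `f`. -/
def infl (n : ℕ) (i : Fin n) (f : (Fin n → Bool) → ℝ) : ℝ :=
  cubePr n (fun x => f x ≠ f (Function.update x i (!x i)))

/-- The degree-1 Fourier coefficient `f̂({i}) = E[f(x)·xᵢ]`. -/
def fCoeff (n : ℕ) (f : (Fin n → Bool) → ℝ) (i : Fin n) : ℝ :=
  cubeE n (fun x => f x * sgn1 (x i))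

/-- The degree-1 Fourier weight `W¹(f) = ∑ᵢ f̂({i})²`. -/
def W1 (n : ℕ) (f : (Fin n → Bool) → ℝ) : ℝ := ∑ i, (fCoeff n f i) ^ 2



lemma sum_cube_succ (n : ℕ) (F : (Fin (n+1) → Bool) → ℝ) :
    ∑ x : Fin (n+1) → Bool, F x
      = (∑ y : Fin n → Bool, F (Fin.cons true y)) + ∑ y : Fin n → Bool, F (Fin.cons false y) := by
  rw [← (Fin.consEquiv (fun _ => Bool)).sum_comp F]
  rw [Fintype.sum_prod_type, Fintype.sum_bool]
  rfl

lemma prod_sgn_cons (n : ℕ) (b : Bool) (y : Fin n → Bool) :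
    (∏ i, sgn1 ((Fin.cons b y : Fin (n+1) → Bool) i)) = sgn1 b * ∏ i, sgn1 (y i) := by
  rw [Fin.prod_univ_succ]; simp

lemma lin_cons (n : ℕ) (a : Fin (n+1) → ℝ) (b : Bool) (y : Fin n → Bool) :
    lin (n+1) a (Fin.cons b y) = a 0 * sgn1 b + lin n (fun i => a i.succ) y := by
  unfold lin; rw [Fin.sum_univ_succ]; simp

lemma key_mvt : ∀ (m : ℕ) (g : ℝ → ℝ), ContDiff ℝ (m+1 : ℕ) g →
    ∀ (a : Fin (m+1) → ℝ), (∀ i, 0 < a i) → ∀ s : ℝ,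
    ∃ ξ ∈ Set.Ioo (s - ∑ i, a i) (s + ∑ i, a i),
      (∑ x : Fin (m+1) → Bool, (∏ i, sgn1 (x i)) * g (s + lin (m+1) a x))
        = 2^(m+1) * (∏ i, a i) * iteratedDeriv (m+1) g ξ := by
  intro m
  induction m with
  | zero =>
    intro g hg a hpos s
    have ha0 : 0 < a 0 := hpos 0
    have hdiff : Differentiable ℝ g := hg.differentiable (by simp)
    obtain ⟨ξ, hξ, hval⟩ := exists_hasDerivAt_eq_slope g (deriv g)
      (show s - a 0 < s + a 0 by linarith)
      (hg.continuous.continuousOn) (fun x _ => (hdiff x).hasDerivAt)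
    have hsum : (∑ x : Fin 1 → Bool, (∏ i, sgn1 (x i)) * g (s + lin 1 a x))
        = g (s + a 0) - g (s - a 0) := by
      rw [sum_cube_succ 0 (fun x => (∏ i, sgn1 (x i)) * g (s + lin 1 a x))]
      simp only [prod_sgn_cons, lin_cons]
      simp [sgn1, lin]
      rw [show s + -a 0 = s - a 0 from by ring]
      ring
    refine ⟨ξ, by simpa using hξ, ?_⟩
    rw [hsum]
    have : (s + a 0) - (s - a 0) = 2 * a 0 := by ring
    rw [this] at hval
    have h2 : (0:ℝ) < 2 * a 0 := by linarith
    field_simp at hval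
    simp [iteratedDeriv_one, Fin.prod_univ_one]
    linarith [hval]
  | succ m ih =>
    intro g hg a hpos s
    have ha0 : 0 < a 0 := hpos 0
    set a' : Fin (m+1) → ℝ := fun i => a i.succ with ha'
    have hdiff : Differentiable ℝ g := hg.differentiable (by simp)
    set h : ℝ → ℝ := fun t => ∑ y : Fin (m+1) → Bool,
      (∏ i, sgn1 (y i)) * g (t + lin (m+1) a' y) with hh
    set H : ℝ → ℝ := fun t => ∑ y : Fin (m+1) → Bool,
      (∏ i, sgn1 (y i)) * deriv g (t + lin (m+1) a' y) with hH
    have hder : ∀ t : ℝ, HasDerivAt h (H t) t := by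
      intro t
      apply HasDerivAt.fun_sum
      intro y _
      have h1 : HasDerivAt (fun t => g (t + lin (m+1) a' y))
          (deriv g (t + lin (m+1) a' y)) t := by
        simpa [Function.comp_def] using (hdiff _).hasDerivAt.comp t ((hasDerivAt_id t).add_const (lin (m+1) a' y))
      simpa [mul_comm] using h1.const_mul (∏ i, sgn1 (y i))
    have hcont : ContinuousOn h (Set.Icc (s - a 0) (s + a 0)) :=
      (continuous_finset_sum _ fun y _ =>
        (continuous_const.mul (hdiff.continuous.comp (continuous_id.add continuous_const)))).continuousOn
    obtain ⟨ξ, hξ, hval⟩ := exists_hasDerivAt_eq_slope h H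
      (show s - a 0 < s + a 0 by linarith) hcont (fun x _ => hder x)
    -- contDiff of deriv g
    have hg' : ContDiff ℝ (m+1 : ℕ) (deriv g) := by
      have : ContDiff ℝ ((m+1 : ℕ) + 1) g := by exact_mod_cast hg
      exact (contDiff_succ_iff_deriv.mp this).2.2
    obtain ⟨ξ', hξ', hval'⟩ := ih (deriv g) hg' a' (fun i => hpos i.succ) ξ
    have hb : ∀ (b : Bool),
        (∑ y : Fin (m+1) → Bool,
          (fun x => (∏ i, sgn1 (x i)) * g (s + lin (m+2) a x)) (Fin.cons b y))
        = sgn1 b * h (s + a 0 * sgn1 b) := by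
      intro b
      rw [hh]
      simp only []
      rw [Finset.mul_sum]
      apply Finset.sum_congr rfl
      intro y _
      rw [prod_sgn_cons, lin_cons]
      have e : s + (a 0 * sgn1 b + lin (m+1) a' y)
          = s + a 0 * sgn1 b + lin (m+1) a' y := by ring
      rw [e]; ring
    have hsum : (∑ x : Fin (m+2) → Bool, (∏ i, sgn1 (x i)) * g (s + lin (m+2) a x))
        = h (s + a 0) - h (s - a 0) := by
      rw [sum_cube_succ (m+1) (fun x => (∏ i, sgn1 (x i)) * g (s + lin (m+2) a x)),
        hb true, hb false]
      have e1 : s + a 0 * sgn1 true = s + a 0 := by simp [sgn1]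
      have e2 : s + a 0 * sgn1 false = s - a 0 := by simp [sgn1]; ring
      rw [e1, e2]
      simp [sgn1]
      ring
    refine ⟨ξ', ?_, ?_⟩
    · have hS : (∑ i, a i) = a 0 + ∑ i, a' i := by rw [Fin.sum_univ_succ]
      obtain ⟨h1, h2⟩ := hξ; obtain ⟨h3, h4⟩ := hξ'
      constructor <;> [skip; skip] <;> rw [hS] <;> linarith
    · rw [hsum]
      have e1 : (s + a 0) - (s - a 0) = 2 * a 0 := by ring
      rw [e1] at hval
      have h2 : (2 : ℝ) * a 0 ≠ 0 := by positivity
      have e2 : h (s + a 0) - h (s - a 0) = 2 * a 0 * H ξ := by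
        field_simp at hval; linarith [hval]
      rw [e2]
      have e3 : H ξ = 2^(m+1) * (∏ i, a' i) * iteratedDeriv (m+2) g ξ' := by
        rw [show H ξ = ∑ y : Fin (m+1) → Bool,
          (∏ i, sgn1 (y i)) * deriv g (ξ + lin (m+1) a' y) from rfl, hval',
          ← iteratedDeriv_succ']
      rw [e3]
      have hP : (∏ i : Fin (m+2), a i) = a 0 * ∏ i : Fin (m+1), a' i :=
        Fin.prod_univ_succ a
      rw [hP]
      ring

lemma sum_zero_of_azero (m : ℕ) (g : ℝ → ℝ) (a : Fin m → ℝ) (j : Fin m)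
    (hj : a j = 0) (s : ℝ) :
    ∑ x : Fin m → Bool, (∏ i, sgn1 (x i)) * g (s + lin m a x) = 0 := by
  apply Finset.sum_ninvolution (fun x => Function.update x j (!x j))
  · intro x
    have h1 : lin m a (Function.update x j (!x j)) = lin m a x := by
      unfold lin
      apply Finset.sum_congr rfl
      intro i _
      by_cases hij : i = j
      · subst hij; simp [hj]
      · rw [Function.update_of_ne hij]
    have hkey : ∀ c : Bool, (∏ i, sgn1 (Function.update x j c i))
        = sgn1 c * ∏ i ∈ univ.erase j, sgn1 (x i) := by
      intro c
      have : (fun i => sgn1 (Function.update x j c i))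
          = Function.update (fun i => sgn1 (x i)) j (sgn1 c) := by
        funext i
        by_cases hij : i = j
        · subst hij; simp
        · rw [Function.update_of_ne hij, Function.update_of_ne hij]
      rw [show (∏ i, sgn1 (Function.update x j c i))
          = ∏ i, Function.update (fun i => sgn1 (x i)) j (sgn1 c) i from by rw [this]]
      rw [Finset.prod_update_of_mem (Finset.mem_univ j)]
      rw [Finset.sdiff_singleton_eq_erase]
    have h2 : (∏ i, sgn1 (Function.update x j (!x j) i)) = -∏ i, sgn1 (x i) := by
      rw [hkey, ← Finset.mul_prod_erase univ _ (Finset.mem_univ j)]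
      have : sgn1 (!x j) = -sgn1 (x j) := by cases x j <;> simp [sgn1]
      rw [this]; ring
    rw [h1, h2]; ring
  · intro x _ hEq
    have := congrFun hEq j
    simp at this
  · intro x; exact Finset.mem_univ _
  · intro x
    funext i
    by_cases hij : i = j
    · subst hij; simp
    · rw [Function.update_of_ne hij, Function.update_of_ne hij]

/-- **Fourier coefficients as derivatives.** For `g : ℝ → ℝ` differentiable `m`
times, `a ∈ ℝ_{≥0}^m`, `S = ∑ aᵢ`, and any `s ∈ ℝ`:
`(∏ aᵢ)·inf_{u∈(s-S,s+S)} g⁽ᵐ⁾(u) ≤ E_x[x₁⋯xₘ·g(s + a·x)] ≤ (∏ aᵢ)·sup_{u∈(s-S,s+S)} g⁽ᵐ⁾(u)`. -/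
theorem fourier_is_derivative (m : ℕ) (hm : 0 < m) (g : ℝ → ℝ)
    (hg : ContDiff ℝ m g) (a : Fin m → ℝ) (ha : ∀ i, 0 ≤ a i) (s : ℝ) :
    (∏ i, a i) *
        sInf (iteratedDeriv m g '' Set.Ioo (s - ∑ i, a i) (s + ∑ i, a i)) ≤
      cubeE m (fun x => (∏ i, sgn1 (x i)) * g (s + lin m a x)) ∧
    cubeE m (fun x => (∏ i, sgn1 (x i)) * g (s + lin m a x)) ≤
      (∏ i, a i) *
        sSup (iteratedDeriv m g '' Set.Ioo (s - ∑ i, a i) (s + ∑ i, a i)) := by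
  by_cases hzero : ∀ i, 0 < a i
  · obtain ⟨k, rfl⟩ : ∃ k, m = k + 1 := ⟨m - 1, by omega⟩
    obtain ⟨ξ, hξmem, hξ⟩ := key_mvt k g hg a hzero s
    have hE : cubeE (k+1) (fun x => (∏ i, sgn1 (x i)) * g (s + lin (k+1) a x))
        = (∏ i, a i) * iteratedDeriv (k+1) g ξ := by
      unfold cubeE
      rw [hξ]
      have h2 : (2:ℝ)^(k+1) ≠ 0 := by positivity
      field_simp
    have hcont : Continuous (iteratedDeriv (k+1) g) :=
      hg.continuous_iteratedDeriv (k+1) le_rfl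
    have hcompact : IsCompact (iteratedDeriv (k+1) g ''
        Set.Icc (s - ∑ i, a i) (s + ∑ i, a i)) :=
      isCompact_Icc.image hcont
    have hsub : iteratedDeriv (k+1) g '' Set.Ioo (s - ∑ i, a i) (s + ∑ i, a i)
        ⊆ iteratedDeriv (k+1) g '' Set.Icc (s - ∑ i, a i) (s + ∑ i, a i) :=
      Set.image_mono Set.Ioo_subset_Icc_self
    have hbdd_below : BddBelow (iteratedDeriv (k+1) g ''
        Set.Ioo (s - ∑ i, a i) (s + ∑ i, a i)) :=
      hcompact.bddBelow.mono hsub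
    have hbdd_above : BddAbove (iteratedDeriv (k+1) g ''
        Set.Ioo (s - ∑ i, a i) (s + ∑ i, a i)) :=
      hcompact.bddAbove.mono hsub
    have hmemim : iteratedDeriv (k+1) g ξ ∈ iteratedDeriv (k+1) g ''
        Set.Ioo (s - ∑ i, a i) (s + ∑ i, a i) := ⟨ξ, hξmem, rfl⟩
    have hprod : (0:ℝ) ≤ ∏ i, a i := Finset.prod_nonneg fun i _ => ha i
    rw [hE]
    exact ⟨mul_le_mul_of_nonneg_left (csInf_le hbdd_below hmemim) hprod,
      mul_le_mul_of_nonneg_left (le_csSup hbdd_above hmemim) hprod⟩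
  · push_neg at hzero
    obtain ⟨j, hj⟩ := hzero
    have hja : a j = 0 := le_antisymm hj (ha j)
    have hE : cubeE m (fun x => (∏ i, sgn1 (x i)) * g (s + lin m a x)) = 0 := by
      unfold cubeE
      rw [sum_zero_of_azero m g a j hja s]
      simp
    have hP : (∏ i, a i) = 0 := Finset.prod_eq_zero (Finset.mem_univ j) hja
    rw [hE, hP]
    simp

end
end

section
/- Let a ∈ ℝ^n with ∑ a_i² = 1 and max_i |a_i| ≤ 1/(16√k) for k ∈ ℕ, k ≥ 1, and let x be uniform on {-1,1}^n. Then Pr[∑ a_i x_i > 4√k] > 2^{-999k}. -/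
open Finset

noncomputable section
open scoped Classical

section Aux

/-- Extract a subset of weight in `[c, c+u]`. -/
lemma extract_subset {ι : Type*} [DecidableEq ι] (w : ι → ℝ) (u c : ℝ) (hu0 : 0 ≤ u) (hc : 0 ≤ c)
    (S : Finset ι) (hnn : ∀ i ∈ S, 0 ≤ w i) (hu : ∀ i ∈ S, w i ≤ u)
    (htot : c ≤ ∑ i ∈ S, w i) :
    ∃ T ⊆ S, c ≤ ∑ i ∈ T, w i ∧ ∑ i ∈ T, w i ≤ c + u := by
  classical
  induction S using Finset.induction_on with
  | empty =>
    simp only [Finset.sum_empty] at htot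
    exact ⟨∅, Finset.Subset.refl _, by simpa using htot, by simp; nlinarith⟩
  | @insert i S hiS ih =>
    by_cases h : c ≤ ∑ j ∈ S, w j
    · obtain ⟨T, hTS, h1, h2⟩ := ih (fun j hj => hnn j (Finset.mem_insert_of_mem hj))
        (fun j hj => hu j (Finset.mem_insert_of_mem hj)) h
      exact ⟨T, hTS.trans (Finset.subset_insert _ _), h1, h2⟩
    · push_neg at h
      refine ⟨insert i S, Finset.Subset.refl _, htot, ?_⟩
      rw [Finset.sum_insert hiS]
      have := hu i (Finset.mem_insert_self i S)
      linarith

/-- Greedy partition into bins of weight in `[4u, 9u]`. -/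
lemma partition_exists {ι : Type*} [DecidableEq ι] (w : ι → ℝ) (u : ℝ) (hu : 0 < u)
    (S : Finset ι) (hnn : ∀ i ∈ S, 0 ≤ w i) (hw : ∀ i ∈ S, w i ≤ u)
    (htot : 4 * u ≤ ∑ i ∈ S, w i) :
    ∃ P : Finset (Finset ι), (∀ B ∈ P, B ⊆ S) ∧
      (S = P.biUnion id) ∧
      (∀ B ∈ P, ∀ C ∈ P, B ≠ C → Disjoint B C) ∧
      (∀ B ∈ P, 4 * u ≤ ∑ i ∈ B, w i ∧ ∑ i ∈ B, w i ≤ 9 * u) := by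
  classical
  obtain ⟨m, hm⟩ : ∃ m, S.card ≤ m := ⟨S.card, le_refl _⟩
  induction m generalizing S with
  | zero =>
    exfalso
    have : S = ∅ := Finset.card_eq_zero.mp (Nat.le_zero.mp hm)
    subst this; simp at htot; linarith
  | succ m ih =>
  by_cases hbig : ∑ i ∈ S, w i ≤ 9 * u
  · refine ⟨{S}, by simp, by simp, by simp, by simp [htot, hbig]⟩
  · push_neg at hbig
    obtain ⟨T, hTS, hT1, hT2⟩ := extract_subset w u (4*u) (by linarith) (by linarith) S hnn hw htot
    have hTne : T.Nonempty := by
      rcases Finset.eq_empty_or_nonempty T with rfl | h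
      · simp at hT1; linarith
      · exact h
    have hssub : S \ T ⊂ S := by
      refine Finset.sdiff_ssubset hTS hTne
    have hcard : (S \ T).card < S.card := Finset.card_lt_card hssub
    have hsum : ∑ i ∈ S \ T, w i = ∑ i ∈ S, w i - ∑ i ∈ T, w i := by
      rw [eq_sub_iff_add_eq, Finset.sum_sdiff hTS]
    have htot' : 4 * u ≤ ∑ i ∈ S \ T, w i := by rw [hsum]; linarith
    obtain ⟨P', hP'S, hP'un, hP'dis, hP'w⟩ := ih (S \ T)
      (fun i hi => hnn i (Finset.mem_sdiff.mp hi).1)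
      (fun i hi => hw i (Finset.mem_sdiff.mp hi).1) htot'
      (by omega)
    have hTdisj : ∀ B ∈ P', Disjoint T B := by
      intro B hB
      exact Finset.disjoint_left.mpr (fun i hiT hiB =>
        (Finset.mem_sdiff.mp (hP'S B hB hiB)).2 hiT)
    have hTnot : T ∉ P' := by
      intro h
      have := hTdisj T h
      exact hTne.ne_empty ((Finset.disjoint_self_iff_empty T).mp this)
    refine ⟨insert T P', ?_, ?_, ?_, ?_⟩
    · intro B hB
      rcases Finset.mem_insert.mp hB with rfl | hB
      · exact hTS
      · exact (hP'S B hB).trans (Finset.sdiff_subset)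
    · rw [Finset.biUnion_insert, ← hP'un]
      simp only [id]
      rw [Finset.union_comm, Finset.sdiff_union_of_subset hTS]
    · intro B hB C hC hBC
      rcases Finset.mem_insert.mp hB with hB' | hB'
      · rcases Finset.mem_insert.mp hC with hC' | hC'
        · exact absurd (hB'.trans hC'.symm) hBC
        · exact hB' ▸ hTdisj C hC'
      · rcases Finset.mem_insert.mp hC with hC' | hC'
        · exact hC' ▸ (hTdisj B hB').symm
        · exact hP'dis B hB' C hC' hBC
    · intro B hB
      rcases Finset.mem_insert.mp hB with rfl | hB
      · exact ⟨hT1, by linarith⟩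
      · exact hP'w B hB

variable {n : ℕ}

lemma sgn1_sq (b : Bool) : sgn1 b ^ 2 = 1 := by cases b <;> simp [sgn1]
lemma sgn1_not (b : Bool) : sgn1 (!b) = - sgn1 b := by cases b <;> simp [sgn1]

variable {n : ℕ}

def binSum (B : Finset (Fin n)) (a : Fin n → ℝ) (x : Fin n → Bool) : ℝ :=
  ∑ i ∈ B, a i * sgn1 (x i)

lemma binSum_update {B : Finset (Fin n)} {i : Fin n} (hi : i ∉ B) (a : Fin n → ℝ)
    (x : Fin n → Bool) (b : Bool) : binSum B a (Function.update x i b) = binSum B a x := by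
  unfold binSum
  refine Finset.sum_congr rfl (fun j hj => ?_)
  have hne : j ≠ i := fun h => hi (by rwa [h] at hj)
  rw [Function.update_of_ne hne]

def flip1 (i : Fin n) (x : Fin n → Bool) : Fin n → Bool := Function.update x i (!x i)

lemma flip1_invol (i : Fin n) : Function.Involutive (flip1 i) := by
  intro x
  funext j
  by_cases h : j = i
  · subst h; simp [flip1]
  · simp [flip1, Function.update_of_ne h]

lemma sum_flip1 (i : Fin n) (f : (Fin n → Bool) → ℝ) :
    ∑ x : Fin n → Bool, f (flip1 i x) = ∑ x : Fin n → Bool, f x :=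
  Fintype.sum_bijective (flip1 i) (flip1_invol i).bijective _ _ (fun x => rfl)

lemma odd_vanish (i : Fin n) (g : (Fin n → Bool) → ℝ)
    (hg : ∀ x b, g (Function.update x i b) = g x) :
    ∑ x : Fin n → Bool, sgn1 (x i) * g x = 0 := by
  have h1 : ∑ x : Fin n → Bool, sgn1 (x i) * g x
      = ∑ x : Fin n → Bool, sgn1 (flip1 i x i) * g (flip1 i x) :=
    (sum_flip1 i (fun x => sgn1 (x i) * g x)).symm
  have h2 : ∀ x : Fin n → Bool, sgn1 (flip1 i x i) * g (flip1 i x)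
      = - (sgn1 (x i) * g x) := by
    intro x
    simp [flip1, sgn1_not, hg]
  have hS : ∑ x : Fin n → Bool, sgn1 (x i) * g x
      = - ∑ x : Fin n → Bool, sgn1 (x i) * g x := by
    conv_lhs => rw [h1]
    simp only [h2, Finset.sum_neg_distrib]
  linarith

lemma sum_const_cube (c : ℝ) : ∑ _x : Fin n → Bool, c = 2 ^ n * c := by
  rw [Finset.sum_const]
  simp [Fintype.card_fun]

lemma moment2 (B : Finset (Fin n)) (a : Fin n → ℝ) :
    ∑ x : Fin n → Bool, (binSum B a x) ^ 2 = 2 ^ n * ∑ i ∈ B, (a i) ^ 2 := by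
  classical
  induction B using Finset.induction_on with
  | empty => simp [binSum, sum_const_cube]
  | @insert i B hiB ih =>
    have hsplit : ∀ x : Fin n → Bool,
        binSum (insert i B) a x = a i * sgn1 (x i) + binSum B a x := by
      intro x; unfold binSum; rw [Finset.sum_insert hiB]
    have hodd : ∑ x : Fin n → Bool, sgn1 (x i) * binSum B a x = 0 :=
      odd_vanish i _ (fun x b => binSum_update hiB a x b)
    have expand : ∀ x : Fin n → Bool,
        (binSum (insert i B) a x) ^ 2
          = (a i)^2 + (2 * a i) * (sgn1 (x i) * binSum B a x) + (binSum B a x)^2 := by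
      intro x
      rw [hsplit x]
      have hs := sgn1_sq (x i)
      linear_combination (a i)^2 * hs
    simp only [expand]
    rw [Finset.sum_add_distrib, Finset.sum_add_distrib, ← Finset.mul_sum, hodd,
      sum_const_cube, ih, Finset.sum_insert hiB]
    ring

lemma moment4 (B : Finset (Fin n)) (a : Fin n → ℝ) :
    ∑ x : Fin n → Bool, (binSum B a x) ^ 4 ≤ 3 * 2 ^ n * (∑ i ∈ B, (a i) ^ 2) ^ 2 := by
  classical
  induction B using Finset.induction_on with
  | empty =>
    simp only [binSum, Finset.sum_empty]
    rw [show ((0:ℝ))^4 = 0 by ring]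
    simp [sum_const_cube]
  | @insert i B hiB ih =>
    have hsplit : ∀ x : Fin n → Bool,
        binSum (insert i B) a x = a i * sgn1 (x i) + binSum B a x := by
      intro x; unfold binSum; rw [Finset.sum_insert hiB]
    have hodd1 : ∑ x : Fin n → Bool, sgn1 (x i) * binSum B a x = 0 :=
      odd_vanish i _ (fun x b => binSum_update hiB a x b)
    have hodd3 : ∑ x : Fin n → Bool, sgn1 (x i) * (binSum B a x)^3 = 0 :=
      odd_vanish i _ (fun x b => by rw [binSum_update hiB a x b])
    have expand : ∀ x : Fin n → Bool,
        (binSum (insert i B) a x) ^ 4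
          = (a i)^4 + (4 * (a i)^3) * (sgn1 (x i) * binSum B a x)
            + (6 * (a i)^2) * (binSum B a x)^2
            + (4 * a i) * (sgn1 (x i) * (binSum B a x)^3)
            + (binSum B a x)^4 := by
      intro x
      rw [hsplit x]
      have hs := sgn1_sq (x i)
      linear_combination ((a i)^4 * (sgn1 (x i)^2 + 1) + 4*(a i)^3 * binSum B a x * sgn1 (x i)
        + 6*(a i)^2 * (binSum B a x)^2) * hs
    simp only [expand]
    rw [Finset.sum_add_distrib, Finset.sum_add_distrib, Finset.sum_add_distrib,
      Finset.sum_add_distrib, ← Finset.mul_sum, ← Finset.mul_sum, ← Finset.mul_sum,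
      hodd1, hodd3, sum_const_cube, moment2, Finset.sum_insert hiB]
    have hw : (0:ℝ) ≤ ∑ i ∈ B, (a i)^2 := Finset.sum_nonneg (fun _ _ => sq_nonneg _)
    have h2n : (0:ℝ) < 2 ^ n := by positivity
    nlinarith [ih, mul_nonneg h2n.le (sq_nonneg ((a i)^2))]

def flipB (B : Finset (Fin n)) (x : Fin n → Bool) : Fin n → Bool :=
  fun i => if i ∈ B then !x i else x i

lemma flipB_invol (B : Finset (Fin n)) : Function.Involutive (flipB B) := by
  intro x; funext i; by_cases h : i ∈ B <;> simp [flipB, h]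

lemma binSum_flipB (B : Finset (Fin n)) (a : Fin n → ℝ) (x : Fin n → Bool) :
    binSum B a (flipB B x) = - binSum B a x := by
  unfold binSum flipB
  rw [← Finset.sum_neg_distrib]
  refine Finset.sum_congr rfl (fun i hi => ?_)
  simp [hi, sgn1_not]

/-- Paley–Zygmund-type counting bound on the cube. -/
lemma pz_count (B : Finset (Fin n)) (a : Fin n → ℝ)
    (hw : 0 < ∑ i ∈ B, (a i) ^ 2) (F : Finset (Fin n → Bool))
    (hF : ∀ x, x ∈ F ↔ Real.sqrt (5 / 8 * ∑ i ∈ B, (a i) ^ 2) ≤ binSum B a x) :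
    (3 : ℝ) / 128 * 2 ^ n ≤ (F.card : ℝ) := by
  classical
  have hFE : F = univ.filter (fun x : Fin n → Bool =>
      Real.sqrt (5 / 8 * ∑ i ∈ B, (a i) ^ 2) ≤ binSum B a x) := by
    ext x; simp [hF x, Finset.mem_filter]
  rw [hFE]
  set w : ℝ := ∑ i ∈ B, (a i) ^ 2 with hwdef
  set Y : (Fin n → Bool) → ℝ := binSum B a with hY
  set C2 : Finset (Fin n → Bool) := univ.filter (fun x => 5 / 8 * w ≤ (Y x) ^ 2) with hC2
  have h2n : (0:ℝ) < 2 ^ n := by positivity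
  -- step 1: sum of Y^2 over C2 is large
  have hm2 : ∑ x : Fin n → Bool, (Y x)^2 = 2 ^ n * w := moment2 B a
  have hsplit : ∑ x ∈ C2, (Y x)^2 + ∑ x ∈ univ.filter (fun x => ¬ (5/8*w ≤ (Y x)^2)), (Y x)^2
      = 2 ^ n * w := by
    rw [← hm2]
    exact Finset.sum_filter_add_sum_filter_not univ _ _
  have hsmall : ∑ x ∈ univ.filter (fun x => ¬ (5/8*w ≤ (Y x)^2)), (Y x)^2
      ≤ 5/8 * w * 2 ^ n := by
    calc ∑ x ∈ univ.filter (fun x => ¬ (5/8*w ≤ (Y x)^2)), (Y x)^2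
        ≤ ∑ _x ∈ univ.filter (fun x => ¬ (5/8*w ≤ (Y x)^2)), (5/8*w) := by
          refine Finset.sum_le_sum (fun x hx => ?_)
          have := (Finset.mem_filter.mp hx).2
          push_neg at this
          linarith
      _ = (univ.filter (fun x => ¬ (5/8*w ≤ (Y x)^2))).card * (5/8*w) := by
          rw [Finset.sum_const]; simp
      _ ≤ 5/8 * w * 2 ^ n := by
          have hcard : ((univ.filter (fun x => ¬ (5/8*w ≤ (Y x)^2))).card : ℝ) ≤ 2 ^ n := by
            have := Finset.card_filter_le (univ : Finset (Fin n → Bool))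
              (fun x => ¬ (5/8*w ≤ (Y x)^2))
            have hcu : ((univ : Finset (Fin n → Bool)).card : ℝ) = 2 ^ n := by
              simp [Fintype.card_fun]
            calc ((univ.filter (fun x => ¬ (5/8*w ≤ (Y x)^2))).card : ℝ)
                ≤ ((univ : Finset (Fin n → Bool)).card : ℝ) := by exact_mod_cast this
              _ = 2 ^ n := hcu
          nlinarith [mul_pos (show (0:ℝ) < 5/8*w by linarith) h2n]
  have hbig : 3/8 * w * 2^n ≤ ∑ x ∈ C2, (Y x)^2 := by linarith
  -- step 2: Cauchy–Schwarz
  have hCS : (∑ x ∈ C2, (Y x)^2)^2 ≤ (C2.card : ℝ) * (3 * 2^n * w^2) := by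
    have h1 : (∑ x ∈ C2, (Y x)^2)^2 ≤ (∑ _x ∈ C2, (1:ℝ)^2) * ∑ x ∈ C2, ((Y x)^2)^2 := by
      have := Finset.sum_mul_sq_le_sq_mul_sq C2 (fun _ => (1:ℝ)) (fun x => (Y x)^2)
      simpa using this
    have h2 : (∑ _x ∈ C2, (1:ℝ)^2) = (C2.card : ℝ) := by simp
    have h3 : ∑ x ∈ C2, ((Y x)^2)^2 ≤ 3 * 2^n * w^2 := by
      calc ∑ x ∈ C2, ((Y x)^2)^2 = ∑ x ∈ C2, (Y x)^4 := by
            refine Finset.sum_congr rfl (fun x _ => by ring)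
        _ ≤ ∑ x : Fin n → Bool, (Y x)^4 := by
            refine Finset.sum_le_sum_of_subset_of_nonneg (Finset.subset_univ _) ?_
            intro x _ _; positivity
        _ ≤ 3 * 2^n * w^2 := moment4 B a
    calc (∑ x ∈ C2, (Y x)^2)^2 ≤ (C2.card : ℝ) * ∑ x ∈ C2, ((Y x)^2)^2 := by
          rw [← h2]; exact h1
      _ ≤ (C2.card : ℝ) * (3 * 2^n * w^2) := by
          refine mul_le_mul_of_nonneg_left h3 (by positivity)
  have hC2card : (3:ℝ)/64 * 2^n ≤ (C2.card : ℝ) := by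
    have hb2 : (3/8 * w * 2^n)^2 ≤ (C2.card : ℝ) * (3 * 2^n * w^2) := by
      have hnn : (0:ℝ) ≤ ∑ x ∈ C2, (Y x)^2 := Finset.sum_nonneg (fun x _ => sq_nonneg _)
      have hA : (0:ℝ) ≤ 3/8 * w * 2^n := by positivity
      nlinarith [mul_le_mul hbig hbig hA hnn, hCS]
    have hpos : (0:ℝ) < 3 * 2^n * w^2 := by positivity
    have key : (3/64 * 2^n) * (3 * 2^n * w^2) ≤ (C2.card : ℝ) * (3 * 2^n * w^2) := by
      nlinarith [hb2]
    exact le_of_mul_le_mul_right key hpos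
  -- step 3: symmetry
  set t : ℝ := Real.sqrt (5/8 * w) with ht
  have htpos : 0 < t := Real.sqrt_pos.mpr (by linarith)
  have htsq : t^2 = 5/8 * w := Real.sq_sqrt (by linarith)
  set E : Finset (Fin n → Bool) := univ.filter (fun x => t ≤ Y x) with hE
  set E' : Finset (Fin n → Bool) := univ.filter (fun x => Y x ≤ -t) with hE'
  have hcardEE' : E.card = E'.card := by
    refine Finset.card_bij' (fun x _ => flipB B x) (fun x _ => flipB B x) ?_ ?_ ?_ ?_
    · intro x hx
      simp only [hE', Finset.mem_filter, Finset.mem_univ, true_and]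
      have : Y (flipB B x) = - Y x := binSum_flipB B a x
      rw [this]
      have := (Finset.mem_filter.mp hx).2
      linarith
    · intro x hx
      simp only [hE, Finset.mem_filter, Finset.mem_univ, true_and]
      have : Y (flipB B x) = - Y x := binSum_flipB B a x
      rw [this]
      have := (Finset.mem_filter.mp hx).2
      linarith
    · intro x _; exact flipB_invol B x
    · intro x _; exact flipB_invol B x
  have hsub : C2 ⊆ E ∪ E' := by
    intro x hx
    have hx2 : 5/8 * w ≤ (Y x)^2 := (Finset.mem_filter.mp hx).2
    have habs : t ≤ |Y x| := by
      rw [ht, ← Real.sqrt_sq_eq_abs]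
      exact Real.sqrt_le_sqrt hx2
    rcases le_or_gt 0 (Y x) with h | h
    · exact Finset.mem_union_left _ (Finset.mem_filter.mpr ⟨Finset.mem_univ _,
        by rwa [abs_of_nonneg h] at habs⟩)
    · exact Finset.mem_union_right _ (Finset.mem_filter.mpr ⟨Finset.mem_univ _,
        by rw [abs_of_neg h] at habs; linarith⟩)
  have hcount : (C2.card : ℝ) ≤ 2 * (E.card : ℝ) := by
    have h1 : C2.card ≤ (E ∪ E').card := Finset.card_le_card hsub
    have h2 : (E ∪ E').card ≤ E.card + E'.card := Finset.card_union_le E E'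
    have : (C2.card : ℝ) ≤ (E.card : ℝ) + (E'.card : ℝ) := by exact_mod_cast h1.trans h2
    rw [← hcardEE'] at this
    linarith
  calc (3:ℝ)/128 * 2^n = (3/64 * 2^n)/2 := by ring
    _ ≤ (C2.card : ℝ)/2 := by linarith
    _ ≤ (E.card : ℝ) := by linarith

def mergeB (B : Finset (Fin n)) (x y : Fin n → Bool) : Fin n → Bool :=
  fun i => if i ∈ B then x i else y i

lemma card_indep (B : Finset (Fin n)) (A C : Finset (Fin n → Bool))
    (hA : ∀ x y, (∀ i ∈ B, x i = y i) → (x ∈ A ↔ y ∈ A))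
    (hC : ∀ x y, (∀ i ∉ B, x i = y i) → (x ∈ C ↔ y ∈ C)) :
    (((A ∩ C).card : ℝ)) * 2 ^ n = (A.card : ℝ) * (C.card : ℝ) := by
  classical
  have key : (A ×ˢ C).card = ((A ∩ C) ×ˢ (univ : Finset (Fin n → Bool))).card := by
    refine Finset.card_bij' (fun p _ => (mergeB B p.1 p.2, mergeB B p.2 p.1))
      (fun p _ => (mergeB B p.1 p.2, mergeB B p.2 p.1)) ?_ ?_ ?_ ?_
    · rintro ⟨x, y⟩ hp
      rw [Finset.mem_product] at hp
      obtain ⟨hx, hy⟩ := hp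
      rw [Finset.mem_product]
      refine ⟨Finset.mem_inter.mpr ⟨?_, ?_⟩, Finset.mem_univ _⟩
      · exact (hA (mergeB B x y) x (fun i hi => by simp [mergeB, hi])).mpr hx
      · exact (hC (mergeB B x y) y (fun i hi => by simp [mergeB, hi])).mpr hy
    · rintro ⟨z, v⟩ hp
      rw [Finset.mem_product] at hp
      obtain ⟨hz, _⟩ := hp
      obtain ⟨hzA, hzC⟩ := Finset.mem_inter.mp hz
      rw [Finset.mem_product]
      constructor
      · exact (hA (mergeB B z v) z (fun i hi => by simp [mergeB, hi])).mpr hzA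
      · exact (hC (mergeB B v z) z (fun i hi => by simp [mergeB, hi])).mpr hzC
    · rintro ⟨x, y⟩ _
      have h1 : mergeB B (mergeB B x y) (mergeB B y x) = x := by
        funext i; by_cases h : i ∈ B <;> simp [mergeB, h]
      have h2 : mergeB B (mergeB B y x) (mergeB B x y) = y := by
        funext i; by_cases h : i ∈ B <;> simp [mergeB, h]
      simp [h1, h2]
    · rintro ⟨x, y⟩ _
      have h1 : mergeB B (mergeB B x y) (mergeB B y x) = x := by
        funext i; by_cases h : i ∈ B <;> simp [mergeB, h]
      have h2 : mergeB B (mergeB B y x) (mergeB B x y) = y := by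
        funext i; by_cases h : i ∈ B <;> simp [mergeB, h]
      simp [h1, h2]
  rw [Finset.card_product, Finset.card_product] at key
  have hcu : (univ : Finset (Fin n → Bool)).card = 2 ^ n := by
    simp [Fintype.card_fun]
  rw [hcu] at key
  exact_mod_cast key.symm

lemma indep_prod (P : Finset (Finset (Fin n)))
    (hdis : ∀ B ∈ P, ∀ C ∈ P, B ≠ C → Disjoint B C)
    (E : Finset (Fin n) → (Fin n → Bool) → Prop)
    (hE : ∀ B ∈ P, ∀ x y, (∀ i ∈ B, x i = y i) → (E B x ↔ E B y)) :
    ∏ B ∈ P, (((univ.filter (E B)).card : ℝ) / 2 ^ n)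
      ≤ ((univ.filter (fun x => ∀ B ∈ P, E B x)).card : ℝ) / 2 ^ n := by
  classical
  induction P using Finset.induction_on with
  | empty => simp
  | @insert B P hBP ih =>
    have hdis' : ∀ B' ∈ P, ∀ C ∈ P, B' ≠ C → Disjoint B' C := fun B' hB' C hC h =>
      hdis B' (Finset.mem_insert_of_mem hB') C (Finset.mem_insert_of_mem hC) h
    have hE' : ∀ B' ∈ P, ∀ x y, (∀ i ∈ B', x i = y i) → (E B' x ↔ E B' y) :=
      fun B' hB' => hE B' (Finset.mem_insert_of_mem hB')
    have hIH := ih hdis' hE'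
    have hagree : ∀ x y : Fin n → Bool, (∀ i ∉ B, x i = y i) → ∀ C ∈ P, ∀ i ∈ C, x i = y i := by
      intro x y hxy C hC i hi
      refine hxy i (fun hiB => ?_)
      have hne : B ≠ C := fun h => hBP (h ▸ hC)
      have := hdis B (Finset.mem_insert_self _ _) C (Finset.mem_insert_of_mem hC) hne
      exact (Finset.disjoint_left.mp this) hiB hi
    have hkey := card_indep B (univ.filter (E B)) (univ.filter (fun x => ∀ C ∈ P, E C x))
      (by
        intro x y hxy
        simp only [Finset.mem_filter, Finset.mem_univ, true_and]
        exact hE B (Finset.mem_insert_self _ _) x y hxy)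
      (by
        intro x y hxy
        simp only [Finset.mem_filter, Finset.mem_univ, true_and]
        exact ⟨fun h C hC => (hE' C hC x y (hagree x y hxy C hC)).mp (h C hC),
               fun h C hC => (hE' C hC x y (hagree x y hxy C hC)).mpr (h C hC)⟩)
    have hfilter : (univ.filter (fun x => ∀ C ∈ insert B P, E C x))
        = (univ.filter (E B)) ∩ (univ.filter (fun x => ∀ C ∈ P, E C x)) := by
      ext x
      simp [Finset.mem_filter, Finset.mem_inter, Finset.forall_mem_insert]
    have h2n : (0:ℝ) < 2 ^ n := by positivity
    rw [Finset.prod_insert hBP, hfilter]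
    have hPnn : (0:ℝ) ≤ ((univ.filter (E B)).card : ℝ) / 2 ^ n := by positivity
    calc ((univ.filter (E B)).card : ℝ) / 2 ^ n
          * ∏ C ∈ P, (((univ.filter (E C)).card : ℝ) / 2 ^ n)
        ≤ ((univ.filter (E B)).card : ℝ) / 2 ^ n
          * (((univ.filter (fun x => ∀ C ∈ P, E C x)).card : ℝ) / 2 ^ n) :=
          mul_le_mul_of_nonneg_left hIH hPnn
      _ = (((univ.filter (E B)) ∩ (univ.filter (fun x => ∀ C ∈ P, E C x))).card : ℝ) / 2 ^ n := by
          rw [div_mul_div_comm, ← hkey]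
          rw [mul_div_mul_right _ _ (show ((2:ℝ)^n) ≠ 0 by positivity)]
      _ = _ := rfl

end Aux

/-- **Anti-concentration for Rademacher sums with small weights.** If `∑ aᵢ² = 1`
and `maxᵢ |aᵢ| ≤ 1/(16√k)` for `k ≥ 1`, then `Pr[∑ aᵢxᵢ > 4√k] > 2^{-999k}`. -/
theorem rademacher_tail_lower_bound (n k : ℕ) (hk : 1 ≤ k) (a : Fin n → ℝ)
    (h2 : (∑ i, (a i) ^ 2) = 1)
    (hmax : ∀ i, |a i| ≤ 1 / (16 * Real.sqrt k)) :
    (2 : ℝ) ^ (-(999 * (k : ℤ))) < cubePr n (fun x => 4 * Real.sqrt k < lin n a x) := by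
  classical
  have hk1 : (1:ℝ) ≤ (k:ℝ) := by exact_mod_cast hk
  have hk0 : (0:ℝ) < (k:ℝ) := by linarith
  have hsk : (0:ℝ) < Real.sqrt k := Real.sqrt_pos.mpr hk0
  have hsksq : (Real.sqrt k)^2 = (k:ℝ) := Real.sq_sqrt hk0.le
  set u : ℝ := 1 / (256 * (k:ℝ)) with hu_def
  have hu : 0 < u := by positivity
  have ha2 : ∀ i, (a i)^2 ≤ u := by
    intro i
    have h := hmax i
    have habs : (a i)^2 = |a i|^2 := (sq_abs _).symm
    have hsq := pow_le_pow_left₀ (abs_nonneg (a i)) h 2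
    rw [← habs] at hsq
    calc (a i)^2 ≤ (1 / (16 * Real.sqrt k))^2 := hsq
      _ = 1 / (256 * (k:ℝ)) := by
          rw [div_pow, mul_pow, hsksq]; norm_num
  have htot : 4 * u ≤ ∑ i, (a i)^2 := by
    rw [h2, hu_def, show 4*(1/(256*(k:ℝ))) = 1/(64*(k:ℝ)) by ring,
      div_le_one (by positivity)]
    linarith
  obtain ⟨P, hPsub, hPun, hPdis, hPw⟩ := partition_exists (fun i => (a i)^2) u hu univ
    (fun i _ => sq_nonneg _) (fun i _ => ha2 i) htot
  set E : Finset (Fin n) → (Fin n → Bool) → Prop :=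
    fun B x => Real.sqrt (5/8 * ∑ i ∈ B, (a i)^2) ≤ binSum B a x with hE_def
  have hEdep : ∀ B ∈ P, ∀ x y : Fin n → Bool, (∀ i ∈ B, x i = y i) → (E B x ↔ E B y) := by
    intro B _ x y hxy
    have hbs : binSum B a x = binSum B a y := by
      unfold binSum
      exact Finset.sum_congr rfl (fun i hi => by rw [hxy i hi])
    simp [hE_def, hbs]
  have h2n : (0:ℝ) < 2^n := by positivity
  have hfac : ∀ B ∈ P, (3:ℝ)/128 ≤ ((univ.filter (E B)).card : ℝ) / 2^n := by
    intro B hB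
    have hwB : 0 < ∑ i ∈ B, (a i)^2 := lt_of_lt_of_le (by positivity) (hPw B hB).1
    rw [le_div_iff₀ h2n]
    exact pz_count B a hwB (univ.filter (E B))
      (fun x => by simp [Finset.mem_filter, hE_def])
  have hprod := indep_prod P hPdis E hEdep
  have hprod2 : ((3:ℝ)/128)^(P.card) ≤ ∏ B ∈ P, (((univ.filter (E B)).card : ℝ) / 2 ^ n) := by
    rw [← Finset.prod_const]
    exact Finset.prod_le_prod (fun B _ => by norm_num) hfac
  have hsum_parts : ∀ f : Fin n → ℝ, ∑ i, f i = ∑ B ∈ P, ∑ i ∈ B, f i := by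
    intro f
    conv_lhs => rw [show (univ : Finset (Fin n)) = P.biUnion id from hPun]
    exact Finset.sum_biUnion (fun B hB C hC hBC => hPdis B hB C hC hBC)
  have hincl : (univ.filter (fun x => ∀ B ∈ P, E B x))
      ⊆ (univ.filter (fun x => 4 * Real.sqrt k < lin n a x)) := by
    intro x hx
    rw [Finset.mem_filter] at hx ⊢
    refine ⟨Finset.mem_univ _, ?_⟩
    have hxE := hx.2
    have hlin : lin n a x = ∑ B ∈ P, binSum B a x := by
      unfold lin binSum
      exact hsum_parts _
    have hlower : ∀ B ∈ P, Real.sqrt (160 * (k:ℝ)) / 3 * (∑ i ∈ B, (a i)^2)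
        ≤ binSum B a x := by
      intro B hB
      refine le_trans ?_ (hxE B hB)
      set wB := ∑ i ∈ B, (a i)^2 with hwB_def
      have hwB0 : 0 < wB := lt_of_lt_of_le (by positivity) (hPw B hB).1
      have hwB9 : wB ≤ 9 * u := (hPw B hB).2
      have hL0 : 0 ≤ Real.sqrt (160 * (k:ℝ)) / 3 * wB := by positivity
      rw [show Real.sqrt (160 * (k:ℝ)) / 3 * wB
          = Real.sqrt (160 * (k:ℝ) * wB^2 / 9) from ?_]
      · refine Real.sqrt_le_sqrt ?_
        have huk : u * (256 * (k:ℝ)) = 1 := by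
          rw [hu_def]; field_simp
        nlinarith [mul_le_mul_of_nonneg_left hwB9
          (by positivity : (0:ℝ) ≤ 160 * (k:ℝ) * wB / 9), huk, hwB0.le, hk0,
          mul_pos hk0 hwB0]
      · rw [show (160 * (k:ℝ) * wB^2 / 9) = (Real.sqrt (160*(k:ℝ)) / 3 * wB)^2 from ?_]
        · rw [Real.sqrt_sq hL0]
        · rw [mul_pow, div_pow, Real.sq_sqrt (by positivity : (0:ℝ) ≤ 160*(k:ℝ))]
          ring
    have hsum_lower : Real.sqrt (160 * (k:ℝ)) / 3 ≤ ∑ B ∈ P, binSum B a x := by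
      have hss := Finset.sum_le_sum hlower
      calc Real.sqrt (160 * (k:ℝ)) / 3
          = Real.sqrt (160 * (k:ℝ)) / 3 * ∑ B ∈ P, ∑ i ∈ B, (a i)^2 := by
            rw [← hsum_parts (fun i => (a i)^2), h2]; ring
        _ = ∑ B ∈ P, Real.sqrt (160 * (k:ℝ)) / 3 * (∑ i ∈ B, (a i)^2) := by
            rw [Finset.mul_sum]
        _ ≤ ∑ B ∈ P, binSum B a x := hss
    have hstrict : 4 * Real.sqrt k < Real.sqrt (160 * (k:ℝ)) / 3 := by
      have h160 : Real.sqrt (160 * (k:ℝ)) = Real.sqrt 160 * Real.sqrt k :=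
        Real.sqrt_mul (by norm_num) _
      have h12 : (12:ℝ) < Real.sqrt 160 := by
        have h144 : Real.sqrt 144 < Real.sqrt 160 :=
          Real.sqrt_lt_sqrt (by norm_num) (by norm_num)
        rwa [show (144:ℝ) = 12^2 by norm_num,
          Real.sqrt_sq (by norm_num : (0:ℝ) ≤ 12)] at h144
      rw [h160, lt_div_iff₀ (by norm_num : (0:ℝ) < 3)]
      nlinarith [hsk]
    rw [hlin]
    linarith
  have hcardP : P.card ≤ 64 * k := by
    have h1 : (P.card : ℝ) * (4 * u) ≤ 1 := by
      have hle : ∑ _B ∈ P, (4*u) ≤ ∑ B ∈ P, ∑ i ∈ B, (a i)^2 :=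
        Finset.sum_le_sum (fun B hB => (hPw B hB).1)
      rw [Finset.sum_const, nsmul_eq_mul] at hle
      rw [← hsum_parts (fun i => (a i)^2), h2] at hle
      exact hle
    have h2' : (P.card : ℝ) ≤ 64 * (k:ℝ) := by
      rw [hu_def] at h1
      rw [show (P.card:ℝ) * (4 * (1/(256*(k:ℝ)))) = (P.card:ℝ) / (64*(k:ℝ)) by
        field_simp; ring] at h1
      rw [div_le_one (by positivity)] at h1
      linarith
    exact_mod_cast h2'
  have hchain1 : ((univ.filter (fun x => ∀ B ∈ P, E B x)).card : ℝ) / 2^n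
      ≤ cubePr n (fun x => 4 * Real.sqrt k < lin n a x) := by
    unfold cubePr
    have := Finset.card_le_card hincl
    gcongr

  have hpow1 : ((3:ℝ)/128)^(64*k) ≤ ((3:ℝ)/128)^(P.card) :=
    pow_le_pow_of_le_one (by norm_num) (by norm_num) hcardP
  have hzpow : (2:ℝ)^(-(999*(k:ℤ))) = ((1:ℝ)/2^999)^k := by
    rw [show (999*(k:ℤ)) = ((999*k : ℕ):ℤ) by push_cast; ring]
    rw [zpow_neg, zpow_natCast, pow_mul, one_div, inv_pow]
  have hbase : ((1:ℝ)/2^999) < ((3:ℝ)/128)^64 := by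
    rw [div_lt_iff₀ (by positivity)]
    have h1 : (1:ℝ) ≤ 2^551 := one_le_pow₀ (by norm_num)
    have h3 : ((3:ℝ)/128)^64 * 2^448 = 3^64 := by
      rw [show (2:ℝ)^448 = 128^64 by
        rw [show (128:ℝ) = 2^7 by norm_num, ← pow_mul], ← mul_pow]
      norm_num
    calc (1:ℝ) < ((3:ℝ)/128)^64 * 2^448 := by rw [h3]; norm_num
      _ ≤ ((3:ℝ)/128)^64 * 2^448 * 2^551 := le_mul_of_one_le_right (by positivity) h1
      _ = ((3:ℝ)/128)^64 * 2^999 := by rw [mul_assoc, ← pow_add]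
  have hpow2 : ((1:ℝ)/2^999)^k < (((3:ℝ)/128)^64)^k :=
    pow_lt_pow_left₀ hbase (by positivity) (by omega)
  rw [← pow_mul] at hpow2
  calc (2:ℝ)^(-(999*(k:ℤ))) = ((1:ℝ)/2^999)^k := hzpow
    _ < ((3:ℝ)/128)^(64*k) := hpow2
    _ ≤ ((3:ℝ)/128)^(P.card) := hpow1
    _ ≤ ∏ B ∈ P, (((univ.filter (E B)).card : ℝ) / 2 ^ n) := hprod2
    _ ≤ ((univ.filter (fun x => ∀ B ∈ P, E B x)).card : ℝ) / 2^n := hprod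
    _ ≤ cubePr n (fun x => 4 * Real.sqrt k < lin n a x) := hchain1

end
end
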